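/- Any two generalized α-coverings Q^α and P^α for the same stratified Lie group (ℝⁿ, *_G) are weakly equivalent: sup_i #{j : P_j^α ∩ Q_i^α ≠ ∅} < ∞ and sup_j #{i : Q_i^α ∩ P_j^α ≠ ∅} < ∞. -/

import Mathlib

open MeasureTheory

/-- The dilations of a stratified Lie group realized on `ℝⁿ` in coordinates adapted to the
stratification: coordinate `j` has degree `v j` and scales as `r ^ v j`. -/
def dil {n : ℕ} (v : Fin n → ℕ) (r : ℝ) (x : Fin n → ℝ) : Fin n → ℝ :=
  fun j => r ^ v j * x j

/-- A stratified Lie group realized on `ℝⁿ` through the exponential map: a Lie group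
structure `*_G` on `ℝⁿ` with identity `0`, together with degrees `deg j ≥ 1` of the
coordinates (adapted to the stratification) such that the associated dilations are group
automorphisms. -/
structure StratifiedGroup (n : ℕ) where
  mul : (Fin n → ℝ) → (Fin n → ℝ) → (Fin n → ℝ)
  inv : (Fin n → ℝ) → (Fin n → ℝ)
  mul_assoc' : ∀ x y z, mul (mul x y) z = mul x (mul y z)
  zero_mul' : ∀ x, mul 0 x = x
  mul_zero' : ∀ x, mul x 0 = x
  inv_mul' : ∀ x, mul (inv x) x = 0
  continuous_mul' : Continuous fun p : (Fin n → ℝ) × (Fin n → ℝ) => mul p.1 p.2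
  continuous_inv' : Continuous inv
  deg : Fin n → ℕ
  deg_pos : ∀ j, 1 ≤ deg j
  dil_mul : ∀ r : ℝ, 0 < r → ∀ x y, dil deg r (mul x y) = mul (dil deg r x) (dil deg r y)

/-- The homogeneous dimension `Q = ∑ j deg j` of a stratified group. -/
def StratifiedGroup.Q {n : ℕ} (S : StratifiedGroup n) : ℕ := ∑ j, S.deg j

/-- A homogeneous quasi-norm on a stratified Lie group: a continuous, nonnegative,
`1`-homogeneous (for the dilations), symmetric function vanishing exactly at the identity. -/
structure IsQuasiNorm {n : ℕ} (S : StratifiedGroup n) (N : (Fin n → ℝ) → ℝ) : Prop where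
  continuous : Continuous N
  nonneg : ∀ x, 0 ≤ N x
  homogeneous : ∀ r : ℝ, 0 < r → ∀ x, N (dil S.deg r x) = r * N x
  symm : ∀ x, N (S.inv x) = N x
  eq_zero_iff : ∀ x, N x = 0 ↔ x = 0

/-- The quasi-ball `B(c, R) = {h : ‖c⁻¹ *_G h‖ < R}`. -/
def qBall {n : ℕ} (S : StratifiedGroup n) (N : (Fin n → ℝ) → ℝ)
    (c : Fin n → ℝ) (R : ℝ) : Set (Fin n → ℝ) :=
  {h | N (S.mul (S.inv c) h) < R}

/-- The inner radius of `P`: the supremum of radii of quasi-balls contained in `P`. -/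
noncomputable def inRad {n : ℕ} (S : StratifiedGroup n) (N : (Fin n → ℝ) → ℝ)
    (P : Set (Fin n → ℝ)) : ℝ :=
  sSup {r : ℝ | ∃ c, qBall S N c r ⊆ P}

/-- The outer radius of `P`: the infimum of radii of quasi-balls containing `P`. -/
noncomputable def outRad {n : ℕ} (S : StratifiedGroup n) (N : (Fin n → ℝ) → ℝ)
    (P : Set (Fin n → ℝ)) : ℝ :=
  sInf {R : ℝ | ∃ c, P ⊆ qBall S N c R}

/-- A generalized `α`-covering for the stratified Lie group `(ℝⁿ, *_G)` with respect to the
homogeneous quasi-norm `N`: an admissible covering of `ℝⁿ` by nonempty bounded open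
connected sets of measure `≍ (1 + ‖ξᵢ‖²)^{αQ/2}`, with uniformly comparable inner and
outer quasi-ball radii. -/
structure GenAlphaCovering {n : ℕ} (S : StratifiedGroup n) (N : (Fin n → ℝ) → ℝ)
    (α : ℝ) (I : Type*) where
  P : I → Set (Fin n → ℝ)
  isOpen' : ∀ i, IsOpen (P i)
  nonempty' : ∀ i, (P i).Nonempty
  connected' : ∀ i, IsConnected (P i)
  covers : ⋃ i, P i = Set.univ
  bounded' : ∀ i, Bornology.IsBounded (P i)
  admissible : ∃ M : ℕ, ∀ i, {j : I | (P i ∩ P j).Nonempty}.encard ≤ (M : ℕ∞)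
  size : ∃ c : ℝ, 0 < c ∧ ∀ i, ∀ ξ ∈ P i,
    (volume (P i)).toReal ≤ c * (1 + N ξ ^ 2) ^ (α * (S.Q : ℝ) / 2) ∧
    (1 + N ξ ^ 2) ^ (α * (S.Q : ℝ) / 2) ≤ c * (volume (P i)).toReal
  ratio : ∃ K : ℝ, 1 ≤ K ∧ ∀ i, outRad S N (P i) ≤ K * inRad S N (P i)

namespace StratifiedGroup

variable {n : ℕ} (S : StratifiedGroup n)

theorem mul_inv' (x : Fin n → ℝ) : S.mul x (S.inv x) = 0 := by
  have h1 : S.mul (S.inv x) (S.mul x (S.inv x)) = S.inv x := by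
    rw [← S.mul_assoc', S.inv_mul', S.zero_mul']
  have h2 : S.mul (S.inv (S.inv x)) (S.mul (S.inv x) (S.mul x (S.inv x)))
      = S.mul (S.inv (S.inv x)) (S.inv x) := by rw [h1]
  rw [← S.mul_assoc', S.inv_mul', S.zero_mul'] at h2
  exact h2

theorem eq_inv_of_mul_eq_zero {x y : Fin n → ℝ} (h : S.mul x y = 0) : x = S.inv y := by
  have := congrArg (fun z => S.mul z (S.inv y)) h
  simpa [S.mul_assoc', S.mul_inv', S.mul_zero', S.zero_mul'] using this

theorem inv_zero : S.inv 0 = 0 := by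
  have := S.eq_inv_of_mul_eq_zero (x := 0) (y := 0) (S.zero_mul' 0)
  exact this.symm

theorem inv_inv (x : Fin n → ℝ) : S.inv (S.inv x) = x :=
  (S.eq_inv_of_mul_eq_zero (S.mul_inv' x)).symm

theorem inv_mul_rev (x y : Fin n → ℝ) :
    S.inv (S.mul x y) = S.mul (S.inv y) (S.inv x) := by
  refine (S.eq_inv_of_mul_eq_zero ?_).symm
  rw [S.mul_assoc', ← S.mul_assoc' (S.inv x) x y, S.inv_mul', S.zero_mul', S.inv_mul']

theorem continuous_lmul (g : Fin n → ℝ) : Continuous (fun h => S.mul g h) :=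
  S.continuous_mul'.comp (continuous_const.prodMk continuous_id)

end StratifiedGroup

section Dil

theorem dil_dil {n : ℕ} (v : Fin n → ℕ) {r s : ℝ} (x : Fin n → ℝ) :
    dil v r (dil v s x) = dil v (r * s) x := by
  funext j; simp [dil, mul_pow]; ring

theorem dil_one {n : ℕ} (v : Fin n → ℕ) (x : Fin n → ℝ) : dil v 1 x = x := by
  funext j; simp [dil]

theorem dil_inv_cancel {n : ℕ} (v : Fin n → ℕ) {t : ℝ} (ht : t ≠ 0) (x : Fin n → ℝ) :
    dil v t (dil v t⁻¹ x) = x := by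
  rw [dil_dil, mul_inv_cancel₀ ht, dil_one]

theorem abs_dil_apply {n : ℕ} (v : Fin n → ℕ) (r : ℝ) (x : Fin n → ℝ) (j : Fin n) :
    |dil v r x j| = |r| ^ v j * |x j| := by
  simp [dil, abs_mul, abs_pow]

end Dil

namespace IsQuasiNorm

variable {n : ℕ} {S : StratifiedGroup n} {N : (Fin n → ℝ) → ℝ}

theorem map_zero (hN : IsQuasiNorm S N) : N 0 = 0 := (hN.eq_zero_iff 0).2 rfl

/-- The unit sphere of the reference homogeneous gauge. -/
def sph (n : ℕ) : Set (Fin n → ℝ) := {x | (∀ j, |x j| ≤ 1) ∧ ∃ j, |x j| = 1}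

theorem isCompact_sph (n : ℕ) : IsCompact (sph n) := by
  have hbox : IsCompact (Set.pi Set.univ fun _ : Fin n => Set.Icc (-1 : ℝ) 1) :=
    isCompact_univ_pi fun _ => isCompact_Icc
  refine IsCompact.of_isClosed_subset hbox ?_ ?_
  · rw [sph, Set.setOf_and, Set.setOf_forall, Set.setOf_exists]
    exact (isClosed_iInter fun j =>
        isClosed_le ((continuous_apply j).abs) continuous_const).inter
      (isClosed_iUnion_of_finite fun j =>
        isClosed_eq ((continuous_apply j).abs) continuous_const)
  · intro x hx
    simp only [Set.mem_pi, Set.mem_univ, Set.mem_Icc, forall_true_left]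
    intro j
    exact abs_le.1 (hx.1 j)

theorem sph_nonempty {n : ℕ} (hn : 0 < n) : (sph n).Nonempty :=
  ⟨fun _ => 1, fun j => by simp, ⟨⟨0, hn⟩, by simp⟩⟩

theorem ne_zero_of_mem_sph {n : ℕ} {x : Fin n → ℝ} (hx : x ∈ sph n) : x ≠ 0 := by
  obtain ⟨j, hj⟩ := hx.2
  intro h; rw [h] at hj; simp at hj

/-- Lower comparison with the reference gauge: points of small quasi-norm lie in a small
anisotropic box. -/
theorem norm_lower (hn : 0 < n) (hN : IsQuasiNorm S N) :
    ∃ m : ℝ, 0 < m ∧ ∀ x : Fin n → ℝ, ∀ t : ℝ, 0 < t → N x < m * t →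
      ∀ j, |x j| < t ^ S.deg j := by
  haveI : Nonempty (Fin n) := ⟨⟨0, hn⟩⟩
  obtain ⟨u₀, hu₀, hmin⟩ := (isCompact_sph n).exists_isMinOn (sph_nonempty hn)
    hN.continuous.continuousOn
  have hm : 0 < N u₀ := by
    rcases lt_or_eq_of_le (hN.nonneg u₀) with h | h
    · exact h
    · exact absurd ((hN.eq_zero_iff u₀).1 h.symm) (ne_zero_of_mem_sph hu₀)
  refine ⟨N u₀, hm, fun x t ht hxt => ?_⟩
  by_contra hcon
  push_neg at hcon
  obtain ⟨j₀, hj₀⟩ := hcon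
  -- the anisotropic gauge of x
  set ρ : ℝ := Finset.univ.sup' Finset.univ_nonempty
    (fun j => |x j| ^ ((S.deg j : ℝ))⁻¹) with hρdef
  have hdeg0 : ∀ j : Fin n, (S.deg j : ℝ) ≠ 0 := fun j =>
    Nat.cast_ne_zero.2 (Nat.one_le_iff_ne_zero.1 (S.deg_pos j))
  have hpow_inv : ∀ (a : ℝ), 0 ≤ a → ∀ j : Fin n, (a ^ ((S.deg j : ℝ))⁻¹) ^ S.deg j = a := by
    intro a ha j
    rw [← Real.rpow_natCast (a ^ ((S.deg j : ℝ))⁻¹) (S.deg j), ← Real.rpow_mul ha,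
      inv_mul_cancel₀ (hdeg0 j), Real.rpow_one]
  have htρ : t ≤ ρ := by
    have h1 : (t ^ S.deg j₀ : ℝ) ^ ((S.deg j₀ : ℝ))⁻¹ ≤ |x j₀| ^ ((S.deg j₀ : ℝ))⁻¹ :=
      Real.rpow_le_rpow (pow_nonneg ht.le _) hj₀ (by positivity)
    have h2 : (t ^ S.deg j₀ : ℝ) ^ ((S.deg j₀ : ℝ))⁻¹ = t := by
      rw [← Real.rpow_natCast t (S.deg j₀), ← Real.rpow_mul ht.le,
        mul_inv_cancel₀ (hdeg0 j₀), Real.rpow_one]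
    exact le_trans (h2 ▸ h1) (Finset.le_sup' _ (Finset.mem_univ j₀))
  have hρpos : 0 < ρ := lt_of_lt_of_le ht htρ
  have hle : ∀ j, |x j| ≤ ρ ^ S.deg j := by
    intro j
    have := Finset.le_sup' (fun j => |x j| ^ ((S.deg j : ℝ))⁻¹) (Finset.mem_univ j)
    calc |x j| = (|x j| ^ ((S.deg j : ℝ))⁻¹) ^ S.deg j := (hpow_inv _ (abs_nonneg _) j).symm
      _ ≤ ρ ^ S.deg j := pow_le_pow_left₀ (Real.rpow_nonneg (abs_nonneg _) _) this _
  obtain ⟨j₁, _, hj₁⟩ := Finset.exists_mem_eq_sup' Finset.univ_nonempty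
    (fun j => |x j| ^ ((S.deg j : ℝ))⁻¹)
  have heq : |x j₁| = ρ ^ S.deg j₁ := by
    rw [hρdef, hj₁, hpow_inv _ (abs_nonneg _) j₁]
  -- scale onto the sphere
  have hsph : dil S.deg ρ⁻¹ x ∈ sph n := by
    constructor
    · intro j
      rw [abs_dil_apply, abs_of_pos (inv_pos.2 hρpos), inv_pow]
      rw [inv_mul_le_iff₀ (pow_pos hρpos _), mul_one]
      exact hle j
    · refine ⟨j₁, ?_⟩
      rw [abs_dil_apply, abs_of_pos (inv_pos.2 hρpos), inv_pow, heq,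
        inv_mul_cancel₀ (pow_pos hρpos _).ne']
  have : N x = ρ * N (dil S.deg ρ⁻¹ x) := by
    conv_lhs => rw [← dil_inv_cancel S.deg hρpos.ne' x]
    exact hN.homogeneous ρ hρpos _
  have hge : N u₀ * t ≤ N x := by
    rw [this]
    calc N u₀ * t ≤ N (dil S.deg ρ⁻¹ x) * ρ :=
      mul_le_mul (hmin hsph) htρ ht.le (hN.nonneg _)
    _ = ρ * N (dil S.deg ρ⁻¹ x) := mul_comm _ _
  exact absurd hxt (not_lt.2 hge)

/-- Upper comparison: the quasi-norm is bounded on anisotropic boxes. -/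
theorem norm_upper (hN : IsQuasiNorm S N) :
    ∃ C : ℝ, 0 < C ∧ ∀ t : ℝ, 0 < t → ∀ x : Fin n → ℝ,
      (∀ j, |x j| ≤ t ^ S.deg j) → N x ≤ C * t := by
  have hbox : IsCompact (Set.pi Set.univ fun _ : Fin n => Set.Icc (-1 : ℝ) 1) :=
    isCompact_univ_pi fun _ => isCompact_Icc
  obtain ⟨u₀, _, hmax⟩ := hbox.exists_isMaxOn
    ⟨0, fun j _ => Set.mem_Icc.2 ⟨by norm_num, by norm_num⟩⟩ hN.continuous.continuousOn
  refine ⟨max (N u₀) 1, lt_of_lt_of_le one_pos (le_max_right _ _), fun t ht x hx => ?_⟩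
  have hmem : dil S.deg t⁻¹ x ∈ Set.pi Set.univ fun _ : Fin n => Set.Icc (-1 : ℝ) 1 := by
    intro j _
    rw [Set.mem_Icc, ← abs_le, abs_dil_apply, abs_of_pos (inv_pos.2 ht), inv_pow,
      inv_mul_le_iff₀ (pow_pos ht _), mul_one]
    exact hx j
  have : N x = t * N (dil S.deg t⁻¹ x) := by
    conv_lhs => rw [← dil_inv_cancel S.deg ht.ne' x]
    exact hN.homogeneous t ht _
  rw [this, mul_comm]
  exact mul_le_mul (le_trans (hmax hmem) (le_max_left _ _)) le_rfl ht.le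
    (le_trans zero_le_one (le_max_right _ _))

/-- Any two homogeneous quasi-norms are comparable. -/
theorem norm_compare (hn : 0 < n) {N' : (Fin n → ℝ) → ℝ}
    (hN : IsQuasiNorm S N) (hN' : IsQuasiNorm S N') :
    ∃ a : ℝ, 1 ≤ a ∧ ∀ x, N' x ≤ a * N x := by
  obtain ⟨m, hm, hlow⟩ := norm_lower hn hN
  obtain ⟨C, hC, hup⟩ := norm_upper hN'
  refine ⟨max (2 * C / m) 1, le_max_right _ _, fun x => ?_⟩
  rcases eq_or_ne x 0 with rfl | hx
  · rw [hN.map_zero, hN'.map_zero, mul_zero]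
  · have hNx : 0 < N x := by
      rcases lt_or_eq_of_le (hN.nonneg x) with h | h
      · exact h
      · exact absurd ((hN.eq_zero_iff x).1 h.symm) hx
    have ht : (0 : ℝ) < 2 * N x / m := by positivity
    have hbox : ∀ j, |x j| ≤ (2 * N x / m) ^ S.deg j := by
      intro j
      refine (hlow x _ ht ?_ j).le
      have h2 : m * (2 * N x / m) = 2 * N x := by field_simp
      rw [h2]
      linarith
    calc N' x ≤ C * (2 * N x / m) := hup _ ht x hbox
      _ = 2 * C / m * N x := by ring
      _ ≤ max (2 * C / m) 1 * N x := by
          exact mul_le_mul_of_nonneg_right (le_max_left _ _) hNx.le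

/-- The quasi-triangle inequality. -/
theorem triangle (hn : 0 < n) (hN : IsQuasiNorm S N) :
    ∃ C : ℝ, 1 ≤ C ∧ ∀ x y, N (S.mul x y) ≤ C * (N x + N y) := by
  obtain ⟨m, hm, hlow⟩ := norm_lower hn hN
  have hbox : IsCompact ((Set.pi Set.univ fun _ : Fin n => Set.Icc (-1 : ℝ) 1) ×ˢ
      (Set.pi Set.univ fun _ : Fin n => Set.Icc (-1 : ℝ) 1)) :=
    (isCompact_univ_pi fun _ => isCompact_Icc).prod
      (isCompact_univ_pi fun _ => isCompact_Icc)
  have hcont : Continuous fun p : (Fin n → ℝ) × (Fin n → ℝ) => N (S.mul p.1 p.2) :=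
    hN.continuous.comp S.continuous_mul'
  obtain ⟨p₀, _, hmax⟩ := hbox.exists_isMaxOn
    ⟨(0, 0), ⟨fun j _ => Set.mem_Icc.2 ⟨by norm_num, by norm_num⟩, fun j _ => Set.mem_Icc.2 ⟨by norm_num, by norm_num⟩⟩⟩ hcont.continuousOn
  set C₀ : ℝ := N (S.mul p₀.1 p₀.2)
  refine ⟨max (2 * C₀ / m) 1, le_max_right _ _, fun x y => ?_⟩
  set r : ℝ := N x + N y with hr
  rcases eq_or_lt_of_le (add_nonneg (hN.nonneg x) (hN.nonneg y)) with h0 | hrpos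
  · have hx : N x = 0 := le_antisymm (by nlinarith [hN.nonneg x, hN.nonneg y]) (hN.nonneg x)
    have hy : N y = 0 := le_antisymm (by nlinarith [hN.nonneg x, hN.nonneg y]) (hN.nonneg y)
    have hr0 : r = 0 := hr.trans h0.symm
    rw [(hN.eq_zero_iff x).1 hx, (hN.eq_zero_iff y).1 hy, S.zero_mul', hN.map_zero,
      hr0, mul_zero]
  · set t : ℝ := 2 * r / m with htdef
    have ht : 0 < t := by positivity
    have hmt : m * t = 2 * r := by
      rw [htdef]; field_simp
    have hxbox : ∀ j, |dil S.deg t⁻¹ x j| ≤ 1 := by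
      intro j
      have h1 : N x < m * t := by rw [hmt]; nlinarith [hN.nonneg y]
      have := hlow x t ht h1 j
      rw [abs_dil_apply, abs_of_pos (inv_pos.2 ht), inv_pow,
        inv_mul_le_iff₀ (pow_pos ht _), mul_one]
      exact this.le
    have hybox : ∀ j, |dil S.deg t⁻¹ y j| ≤ 1 := by
      intro j
      have h1 : N y < m * t := by rw [hmt]; nlinarith [hN.nonneg x]
      have := hlow y t ht h1 j
      rw [abs_dil_apply, abs_of_pos (inv_pos.2 ht), inv_pow,
        inv_mul_le_iff₀ (pow_pos ht _), mul_one]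
      exact this.le
    have hmem : ((dil S.deg t⁻¹ x, dil S.deg t⁻¹ y) : (Fin n → ℝ) × (Fin n → ℝ)) ∈
        (Set.pi Set.univ fun _ : Fin n => Set.Icc (-1 : ℝ) 1) ×ˢ
        (Set.pi Set.univ fun _ : Fin n => Set.Icc (-1 : ℝ) 1) := by
      constructor <;> intro j _ <;> rw [Set.mem_Icc, ← abs_le]
      exacts [hxbox j, hybox j]
    have key : N (S.mul x y) = t * N (S.mul (dil S.deg t⁻¹ x) (dil S.deg t⁻¹ y)) := by
      conv_lhs => rw [← dil_inv_cancel S.deg ht.ne' x, ← dil_inv_cancel S.deg ht.ne' y,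
        ← S.dil_mul t ht]
      exact hN.homogeneous t ht _
    calc N (S.mul x y) = t * N (S.mul (dil S.deg t⁻¹ x) (dil S.deg t⁻¹ y)) := key
      _ ≤ t * C₀ := mul_le_mul_of_nonneg_left (hmax hmem) ht.le
      _ = 2 * C₀ / m * r := by rw [htdef]; field_simp
      _ ≤ max (2 * C₀ / m) 1 * r := mul_le_mul_of_nonneg_right (le_max_left _ _) hrpos.le

end IsQuasiNorm

section MeasureLemmas

variable {n : ℕ} {S : StratifiedGroup n} {N : (Fin n → ℝ) → ℝ}

theorem qBall_eq_preimage (c : Fin n → ℝ) (r : ℝ) :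
    qBall S N c r = (fun h => S.mul (S.inv c) h) ⁻¹' {x | N x < r} := rfl

theorem isOpen_qBall (hN : IsQuasiNorm S N) (c : Fin n → ℝ) (r : ℝ) :
    IsOpen (qBall S N c r) :=
  (isOpen_lt hN.continuous continuous_const).preimage (S.continuous_lmul _)

theorem mem_qBall_self (hN : IsQuasiNorm S N) (c : Fin n → ℝ) {r : ℝ} (hr : 0 < r) :
    c ∈ qBall S N c r := by
  show N (S.mul (S.inv c) c) < r
  rw [S.inv_mul', hN.map_zero]; exact hr

theorem ball_eq_dil_image (hN : IsQuasiNorm S N) {r : ℝ} (hr : 0 < r) :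
    {x | N x < r} = dil S.deg r '' {x | N x < 1} := by
  ext x
  constructor
  · intro hx
    refine ⟨dil S.deg r⁻¹ x, ?_, by rw [dil_dil, mul_inv_cancel₀ hr.ne', dil_one]⟩
    show N _ < 1
    rw [hN.homogeneous r⁻¹ (inv_pos.2 hr) x, inv_mul_lt_iff₀ hr, mul_one]
    exact hx
  · rintro ⟨y, hy, rfl⟩
    show N _ < r
    rw [hN.homogeneous r hr y]
    calc r * N y < r * 1 := by exact mul_lt_mul_of_pos_left hy hr
      _ = r := mul_one r
  
theorem volume_dil_image {r : ℝ} (hr : 0 < r) (A : Set (Fin n → ℝ)) (S : StratifiedGroup n) :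
    volume (dil S.deg r '' A) = ENNReal.ofReal (r ^ S.Q) * volume A := by
  have hlin : (dil S.deg r : (Fin n → ℝ) → Fin n → ℝ)
      = ⇑(Matrix.toLin' (Matrix.diagonal fun j => r ^ S.deg j)) := by
    funext x j
    rw [Matrix.toLin'_apply, Matrix.mulVec_diagonal]
    rfl
  rw [hlin, MeasureTheory.Measure.addHaar_image_linearMap]
  congr 2
  rw [LinearMap.det_toLin', Matrix.det_diagonal, Finset.prod_pow_eq_pow_sum]
  rw [abs_of_pos (pow_pos hr _)]
  rfl

/-- The volume of any quasi-ball: `|B(c,r)| = r^Q · V` for a fixed constant `V ∈ (0,∞)`. -/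
theorem exists_volume_qBall (hn : 0 < n) (hN : IsQuasiNorm S N)
    (hHaar : ∀ (g : Fin n → ℝ) (A : Set (Fin n → ℝ)),
      volume ((fun h => S.mul g h) ⁻¹' A) = volume A) :
    ∃ V : ENNReal, 0 < V ∧ V ≠ ⊤ ∧ ∀ (c : Fin n → ℝ) {r : ℝ}, 0 < r →
      volume (qBall S N c r) = ENNReal.ofReal (r ^ S.Q) * V := by
  refine ⟨volume {x | N x < 1}, ?_, ?_, ?_⟩
  · refine (isOpen_lt hN.continuous continuous_const).measure_pos volume ⟨0, ?_⟩
    show N 0 < 1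
    rw [hN.map_zero]; exact one_pos
  · obtain ⟨m, hm, hlow⟩ := IsQuasiNorm.norm_lower hn hN
    have hsub : {x | N x < 1} ⊆
        Set.pi Set.univ fun j => Set.Icc (-((2/m) ^ S.deg j)) ((2/m) ^ S.deg j) := by
      intro x hx j _
      rw [Set.mem_Icc, ← abs_le]
      refine (hlow x (2/m) (by positivity) ?_ j).le
      have : m * (2 / m) = 2 := by field_simp
      rw [this]
      exact lt_trans hx one_lt_two
    exact ne_top_of_le_ne_top
      ((isCompact_univ_pi fun _ => isCompact_Icc).measure_lt_top).ne
      (measure_mono hsub)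
  · intro c r hr
    rw [qBall_eq_preimage, hHaar, ball_eq_dil_image hN hr, volume_dil_image hr]

end MeasureLemmas

section Helpers

/-- Extraction of `Q`-th roots from a power inequality. -/
theorem pow_root_bound {Q : ℕ} (hQ : Q ≠ 0) {r X : ℝ} (hr : 0 ≤ r) (hX : 0 ≤ X)
    (h : r ^ Q ≤ X) : r ≤ X ^ ((Q : ℝ))⁻¹ := by
  have hQ' : (Q : ℝ) ≠ 0 := Nat.cast_ne_zero.2 hQ
  have h1 := Real.rpow_le_rpow (pow_nonneg hr _) h
    (inv_nonneg.2 (Nat.cast_nonneg Q))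
  rwa [← Real.rpow_natCast r Q, ← Real.rpow_mul hr, mul_inv_cancel₀ hQ',
    Real.rpow_one] at h1

theorem encard_le_of_forall_finset_card_le {α : Type*} {T : Set α} {k : ℕ}
    (h : ∀ F : Finset α, ↑F ⊆ T → F.card ≤ k) : T.encard ≤ (k : ℕ∞) := by
  rcases T.finite_or_infinite with hT | hT
  · rw [hT.encard_eq_coe_toFinset_card]
    exact_mod_cast h hT.toFinset (by simp)
  · obtain ⟨t, hts, htfin, htcard⟩ := hT.exists_subset_ncard_eq (k + 1)
    have h2 := h htfin.toFinset (by simpa using hts)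
    rw [Set.ncard_eq_toFinset_card t htfin] at htcard
    omega

end Helpers

section Counting

open Classical in
/-- Bounded-overlap counting: finitely many sets of bounded overlap inside `B` have total
volume at most `M * volume B`. -/
theorem sum_volume_le_of_boundedOverlap {n : ℕ} {J : Type*} {P : J → Set (Fin n → ℝ)}
    (F : Finset J) (hmeas : ∀ j, MeasurableSet (P j)) {B : Set (Fin n → ℝ)}
    (hBmeas : MeasurableSet B) (hB : ∀ j ∈ F, P j ⊆ B) {M : ℕ}
    (hov : ∀ (x : Fin n → ℝ) (G : Finset J), (∀ j ∈ G, x ∈ P j) → G.card ≤ M) :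
    ∑ j ∈ F, volume (P j) ≤ (M : ENNReal) * volume B := by
  have h1 : ∀ j ∈ F, volume (P j) = ∫⁻ x, (P j).indicator 1 x := fun j _ =>
    (MeasureTheory.lintegral_indicator_one (hmeas j)).symm
  have h3 : ∑ j ∈ F, ∫⁻ x, (P j).indicator 1 x
      = ∫⁻ x, ∑ j ∈ F, (P j).indicator 1 x :=
    (MeasureTheory.lintegral_finset_sum (f := fun j => (P j).indicator 1) F
      (fun j _ => measurable_const.indicator (hmeas j))).symm
  rw [Finset.sum_congr rfl h1, h3]
  have h2 : ∀ x, ∑ j ∈ F, (P j).indicator (1 : (Fin n → ℝ) → ENNReal) x ≤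
      (M : ENNReal) * B.indicator 1 x := by
    intro x
    by_cases hx : x ∈ B
    · have : ∑ j ∈ F, (P j).indicator (1 : (Fin n → ℝ) → ENNReal) x
          = ((F.filter fun j => x ∈ P j).card : ENNReal) := by
        rw [← Finset.sum_boole]
        exact Finset.sum_congr rfl fun j _ => by simp [Set.indicator_apply]
      rw [this, Set.indicator_of_mem hx, Pi.one_apply, mul_one]
      exact_mod_cast Nat.cast_le.2 (hov x _ fun j hj => (Finset.mem_filter.1 hj).2)
    · have : ∀ j ∈ F, (P j).indicator (1 : (Fin n → ℝ) → ENNReal) x = 0 := fun j hj =>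
        Set.indicator_of_notMem (fun hxP => hx (hB j hj hxP)) _
      rw [Finset.sum_congr rfl this, Finset.sum_const, smul_zero]
      exact zero_le
  calc ∫⁻ x, ∑ j ∈ F, (P j).indicator 1 x ≤ ∫⁻ x, (M : ENNReal) * B.indicator 1 x :=
    MeasureTheory.lintegral_mono h2
  _ = (M : ENNReal) * volume B := by
      rw [MeasureTheory.lintegral_const_mul (r := (M : ENNReal))
          (f := B.indicator 1) (measurable_const.indicator hBmeas),
        MeasureTheory.lintegral_indicator_one hBmeas]

/-- From admissibility: the pointwise overlap of a covering is bounded. -/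
theorem overlap_of_admissible {n : ℕ} {J : Type*} {P : J → Set (Fin n → ℝ)} {M : ℕ}
    (hadm : ∀ j, {j' : J | (P j ∩ P j').Nonempty}.encard ≤ (M : ℕ∞))
    (x : Fin n → ℝ) (G : Finset J) (hG : ∀ j ∈ G, x ∈ P j) : G.card ≤ M := by
  rcases G.eq_empty_or_nonempty with rfl | ⟨j₀, hj₀⟩
  · simp
  · have hsub : ↑G ⊆ {j' : J | (P j₀ ∩ P j').Nonempty} := fun j hj =>
      ⟨x, hG j₀ hj₀, hG j hj⟩
    have := le_trans (Set.encard_mono hsub) (hadm j₀)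
    rwa [Set.encard_coe_eq_coe_finsetCard, Nat.cast_le] at this

end Counting

section Radius

variable {n : ℕ} {S : StratifiedGroup n} {N : (Fin n → ℝ) → ℝ}

theorem qBall_mono (c : Fin n → ℝ) {r r' : ℝ} (h : r ≤ r') :
    qBall S N c r ⊆ qBall S N c r' := fun x hx => lt_of_lt_of_le hx h

theorem StratifiedGroup.Q_pos (hn : 0 < n) (S : StratifiedGroup n) : 0 < S.Q :=
  Finset.sum_pos (fun j _ => S.deg_pos j) ⟨⟨0, hn⟩, Finset.mem_univ _⟩

theorem zero_mem_inRadSet (hN : IsQuasiNorm S N) (P : Set (Fin n → ℝ)) :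
    (0 : ℝ) ∈ {r : ℝ | ∃ c, qBall S N c r ⊆ P} := by
  refine ⟨0, fun x hx => absurd hx ?_⟩
  simp only [qBall, Set.mem_setOf_eq, not_lt]
  exact hN.nonneg _

theorem bddAbove_inRadSet (hn : 0 < n) (hN : IsQuasiNorm S N)
    {V : ENNReal} (hV0 : 0 < V) (hVtop : V ≠ ⊤)
    (hVol : ∀ (c : Fin n → ℝ) {r : ℝ}, 0 < r →
      volume (qBall S N c r) = ENNReal.ofReal (r ^ S.Q) * V)
    {P : Set (Fin n → ℝ)} (hP : volume P ≠ ⊤) :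
    BddAbove {r : ℝ | ∃ c, qBall S N c r ⊆ P} := by
  have hVr : 0 < V.toReal := ENNReal.toReal_pos hV0.ne' hVtop
  refine ⟨max (((volume P).toReal / V.toReal) ^ ((S.Q : ℝ))⁻¹) 0, fun r hr => ?_⟩
  rcases le_or_gt r 0 with h0 | h0
  · exact le_trans h0 (le_max_right _ _)
  · obtain ⟨c, hc⟩ := hr
    have h1 : ENNReal.ofReal (r ^ S.Q) * V ≤ volume P := by
      rw [← hVol c h0]; exact measure_mono hc
    have h2 : r ^ S.Q * V.toReal ≤ (volume P).toReal := by
      have := ENNReal.toReal_mono hP h1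
      rwa [ENNReal.toReal_mul, ENNReal.toReal_ofReal (pow_nonneg h0.le _)] at this
    have h3 : r ^ S.Q ≤ (volume P).toReal / V.toReal := (le_div_iff₀ hVr).2 h2
    exact le_trans (pow_root_bound (S.Q_pos hn).ne' h0.le
      (div_nonneg ENNReal.toReal_nonneg ENNReal.toReal_nonneg) h3) (le_max_left _ _)

/-- Every open set contains a quasi-ball around each of its points. -/
theorem exists_qBall_subset (hn : 0 < n) (hN : IsQuasiNorm S N)
    {P : Set (Fin n → ℝ)} (hopen : IsOpen P) {x₀ : Fin n → ℝ} (hx₀ : x₀ ∈ P) :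
    ∃ ε : ℝ, 0 < ε ∧ qBall S N x₀ ε ⊆ P := by
  obtain ⟨m, hm, hlow⟩ := IsQuasiNorm.norm_lower hn hN
  have hU : IsOpen ((fun h => S.mul x₀ h) ⁻¹' P) := hopen.preimage (S.continuous_lmul x₀)
  have h0 : (0 : Fin n → ℝ) ∈ (fun h => S.mul x₀ h) ⁻¹' P := by
    show S.mul x₀ 0 ∈ P
    rwa [S.mul_zero']
  obtain ⟨δ, hδ, hball⟩ := Metric.isOpen_iff.1 hU 0 h0
  set t : ℝ := min (δ / 2) 1 with htdef
  have ht : 0 < t := lt_min (by linarith) one_pos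
  refine ⟨m * t, by positivity, fun h hh => ?_⟩
  set y := S.mul (S.inv x₀) h with hy
  have hyb : ∀ j, |y j| < t ^ S.deg j := hlow y t ht hh
  have hy' : y ∈ Metric.ball 0 δ := by
    rw [Metric.mem_ball, dist_pi_lt_iff hδ]
    intro j
    rw [Real.dist_eq, Pi.zero_apply, sub_zero]
    calc |y j| < t ^ S.deg j := hyb j
      _ ≤ t ^ 1 := pow_le_pow_of_le_one ht.le (min_le_right _ _) (S.deg_pos j)
      _ = t := pow_one t
      _ ≤ δ / 2 := min_le_left _ _
      _ < δ := by linarith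
  have hmem : S.mul x₀ y ∈ P := hball hy'
  have hxy : S.mul x₀ y = h := by
    rw [hy, ← S.mul_assoc', S.mul_inv', S.zero_mul']
  rwa [hxy] at hmem

theorem inRad_pos (hn : 0 < n) (hN : IsQuasiNorm S N)
    {V : ENNReal} (hV0 : 0 < V) (hVtop : V ≠ ⊤)
    (hVol : ∀ (c : Fin n → ℝ) {r : ℝ}, 0 < r →
      volume (qBall S N c r) = ENNReal.ofReal (r ^ S.Q) * V)
    {P : Set (Fin n → ℝ)} (hopen : IsOpen P) (hne : P.Nonempty)
    (hP : volume P ≠ ⊤) : 0 < inRad S N P := by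
  obtain ⟨x₀, hx₀⟩ := hne
  obtain ⟨ε, hε, hsub⟩ := exists_qBall_subset hn hN hopen hx₀
  exact lt_of_lt_of_le hε (le_csSup (bddAbove_inRadSet hn hN hV0 hVtop hVol hP) ⟨x₀, hsub⟩)

theorem volume_ge_of_inRad (hN : IsQuasiNorm S N)
    {V : ENNReal}
    (hVol : ∀ (c : Fin n → ℝ) {r : ℝ}, 0 < r →
      volume (qBall S N c r) = ENNReal.ofReal (r ^ S.Q) * V)
    {P : Set (Fin n → ℝ)} (hpos : 0 < inRad S N P) :
    ENNReal.ofReal ((inRad S N P / 2) ^ S.Q) * V ≤ volume P := by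
  have hne : {r : ℝ | ∃ c, qBall S N c r ⊆ P}.Nonempty := ⟨0, zero_mem_inRadSet hN P⟩
  obtain ⟨r, ⟨c, hc⟩, hr⟩ := exists_lt_of_lt_csSup hne (half_lt_self hpos)
  calc ENNReal.ofReal ((inRad S N P / 2) ^ S.Q) * V
      = volume (qBall S N c (inRad S N P / 2)) := (hVol c (by linarith)).symm
    _ ≤ volume P := measure_mono (le_trans (qBall_mono c hr.le) hc)

theorem subset_qBall_of_outRad (hN : IsQuasiNorm S N)
    {P : Set (Fin n → ℝ)} (hbdd : Bornology.IsBounded P) (hne : P.Nonempty)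
    {K : ℝ} (hK1 : 1 ≤ K) (hKr : outRad S N P ≤ K * inRad S N P)
    (hinpos : 0 < inRad S N P) :
    ∃ c, P ⊆ qBall S N c (2 * K * inRad S N P) := by
  -- the defining set is nonempty
  obtain ⟨C, hC, hup⟩ := IsQuasiNorm.norm_upper hN
  obtain ⟨b, hb⟩ := (Metric.isBounded_iff_subset_closedBall 0).1 hbdd
  set t : ℝ := max b 1 with htdef
  have ht1 : (1 : ℝ) ≤ t := le_max_right _ _
  have hRne : {R : ℝ | ∃ c, P ⊆ qBall S N c R}.Nonempty := by
    refine ⟨C * t + 1, 0, fun x hx => ?_⟩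
    show N (S.mul (S.inv 0) x) < C * t + 1
    rw [S.inv_zero, S.zero_mul']
    have hxb : ∀ j, |x j| ≤ t ^ S.deg j := by
      intro j
      have h1 : dist (x j) 0 ≤ dist x 0 := dist_le_pi_dist x 0 j
      have h2 : dist x 0 ≤ b := Metric.mem_closedBall.1 (hb hx)
      rw [Real.dist_eq, sub_zero] at h1
      calc |x j| ≤ b := le_trans h1 h2
        _ ≤ t := le_max_left _ _
        _ ≤ t ^ S.deg j := le_self_pow₀ ht1 (Nat.one_le_iff_ne_zero.1 (S.deg_pos j))
    have := hup t (by linarith) x hxb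
    linarith
  have hlt : outRad S N P < 2 * K * inRad S N P := by
    have hKip : 0 < K * inRad S N P := mul_pos (lt_of_lt_of_le one_pos hK1) hinpos
    have : K * inRad S N P < 2 * K * inRad S N P := by
      have := lt_two_mul_self hKip
      linarith
    exact lt_of_le_of_lt hKr this
  obtain ⟨R, ⟨c, hc⟩, hR⟩ := exists_lt_of_csInf_lt hRne hlt
  exact ⟨c, le_trans hc (qBall_mono c hR.le)⟩

end Radius

section Cocycle

variable {n : ℕ} {S : StratifiedGroup n} {N : (Fin n → ℝ) → ℝ}

theorem StratifiedGroup.cocycle (S : StratifiedGroup n) (c ξ h : Fin n → ℝ) :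
    S.mul (S.inv c) h = S.mul (S.mul (S.inv c) ξ) (S.mul (S.inv ξ) h) := by
  rw [S.mul_assoc', ← S.mul_assoc' ξ (S.inv ξ) h, S.mul_inv', S.zero_mul']

theorem norm_swap (hN : IsQuasiNorm S N) (ξ c : Fin n → ℝ) :
    N (S.mul (S.inv ξ) c) = N (S.mul (S.inv c) ξ) := by
  have h : S.mul (S.inv ξ) c = S.inv (S.mul (S.inv c) ξ) := by
    rw [S.inv_mul_rev, S.inv_inv]
  rw [h, hN.symm]

theorem weight_compare {a β u v : ℝ} (ha : 1 ≤ a) (hβ : 0 ≤ β) (hu : 0 ≤ u)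
    (hv : 0 ≤ v) (h : u ≤ a * v) :
    (1 + u ^ 2) ^ β ≤ (a ^ 2) ^ β * ((1 + v ^ 2) ^ β) := by
  rw [← Real.mul_rpow (sq_nonneg a) (by positivity)]
  refine Real.rpow_le_rpow (by positivity) ?_ hβ
  nlinarith

end Cocycle

set_option maxHeartbeats 1000000 in
/-- One-sided weak equivalence of two generalized `α`-coverings (the positive-dimension
case). -/
theorem key_oneSided {n : ℕ} {I J : Type*} (hn : 0 < n)
    (S : StratifiedGroup n) (N₁ N₂ : (Fin n → ℝ) → ℝ)
    (h₁ : IsQuasiNorm S N₁) (h₂ : IsQuasiNorm S N₂)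
    (hHaar : ∀ (g : Fin n → ℝ) (A : Set (Fin n → ℝ)),
      volume ((fun h => S.mul g h) ⁻¹' A) = volume A)
    (α : ℝ) (hα₀ : 0 ≤ α)
    (Cov₁ : GenAlphaCovering S N₁ α I) (Cov₂ : GenAlphaCovering S N₂ α J) :
    ∃ M : ℕ, ∀ i : I, {j : J | (Cov₂.P j ∩ Cov₁.P i).Nonempty}.encard ≤ (M : ℕ∞) := by
  classical
  obtain ⟨V₁, hV₁0, hV₁top, hVol₁⟩ := exists_volume_qBall hn h₁ hHaar
  obtain ⟨V₂, hV₂0, hV₂top, hVol₂⟩ := exists_volume_qBall hn h₂ hHaar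
  obtain ⟨a₁₂, ha₁₂, hcmp₁₂⟩ := IsQuasiNorm.norm_compare hn h₁ h₂ -- N₂ ≤ a₁₂ * N₁
  obtain ⟨a₂₁, ha₂₁, hcmp₂₁⟩ := IsQuasiNorm.norm_compare hn h₂ h₁ -- N₁ ≤ a₂₁ * N₂
  obtain ⟨Ct, hCt, htri⟩ := IsQuasiNorm.triangle hn h₂
  obtain ⟨c₁, hc₁, hsize₁⟩ := Cov₁.size
  obtain ⟨c₂, hc₂, hsize₂⟩ := Cov₂.size
  obtain ⟨K₁, hK₁, hratio₁⟩ := Cov₁.ratio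
  obtain ⟨K₂, hK₂, hratio₂⟩ := Cov₂.ratio
  obtain ⟨M₂, hadm₂⟩ := Cov₂.admissible
  have hQ : S.Q ≠ 0 := (S.Q_pos hn).ne'
  set β : ℝ := α * (S.Q : ℝ) / 2 with hβdef
  have hβ : 0 ≤ β := by positivity
  set V₁r : ℝ := V₁.toReal with hV₁rdef
  set V₂r : ℝ := V₂.toReal with hV₂rdef
  have hV₁r : 0 < V₁r := ENNReal.toReal_pos hV₁0.ne' hV₁top
  have hV₂r : 0 < V₂r := ENNReal.toReal_pos hV₂0.ne' hV₂top
  -- comparison constant for the volumes of intersecting pieces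
  set Cw : ℝ := max (c₂ * (a₁₂ ^ 2) ^ β * c₁) (c₁ * (a₂₁ ^ 2) ^ β * c₂) with hCwdef
  have hCw : 0 < Cw := by
    have : (0 : ℝ) < c₂ * (a₁₂ ^ 2) ^ β * c₁ := by
      have h1 : (0 : ℝ) < (a₁₂ ^ 2) ^ β :=
        Real.rpow_pos_of_pos (pow_pos (lt_of_lt_of_le one_pos ha₁₂) 2) _
      positivity
    exact lt_of_lt_of_le this (le_max_left _ _)
  -- geometric constants
  have hK₁0 : (0 : ℝ) < K₁ := lt_of_lt_of_le one_pos hK₁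
  have hK₂0 : (0 : ℝ) < K₂ := lt_of_lt_of_le one_pos hK₂
  have hCt0 : (0 : ℝ) < Ct := lt_of_lt_of_le one_pos hCt
  have ha₁₂0 : (0 : ℝ) < a₁₂ := lt_of_lt_of_le one_pos ha₁₂
  set X : ℝ := Cw * V₁r / V₂r with hXdef
  have hX : 0 < X := by positivity
  set Λ : ℝ := 4 * K₁ * X ^ ((S.Q : ℝ))⁻¹ with hΛdef
  have hΛ : 0 < Λ := by
    have : (0 : ℝ) < X ^ ((S.Q : ℝ))⁻¹ := Real.rpow_pos_of_pos hX _
    positivity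
  set Λ₂ : ℝ := Ct * (2 * a₁₂ * K₁ + 4 * Ct * K₂ * Λ) with hΛ₂def
  have hΛ₂ : 0 < Λ₂ := by positivity
  -- the final bound
  set B' : ℝ := (M₂ : ℝ) * (Λ₂ + 1) ^ S.Q * V₂r * Cw * 2 ^ S.Q with hB'def
  refine ⟨Nat.ceil (B' / V₁r), fun i => ?_⟩
  apply encard_le_of_forall_finset_card_le
  intro F hF
  -- volume facts for the piece `P₁ i`
  have hP₁top : volume (Cov₁.P i) ≠ ⊤ := ((Cov₁.bounded' i).measure_lt_top).ne
  have hP₁pos : 0 < volume (Cov₁.P i) :=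
    (Cov₁.isOpen' i).measure_pos volume (Cov₁.nonempty' i)
  set v₁ : ℝ := (volume (Cov₁.P i)).toReal with hv₁def
  have hv₁ : 0 < v₁ := ENNReal.toReal_pos hP₁pos.ne' hP₁top
  -- the master scale
  set D : ℝ := inRad S N₁ (Cov₁.P i) with hDdef
  have hD : 0 < D := inRad_pos hn h₁ hV₁0 hV₁top hVol₁ (Cov₁.isOpen' i)
    (Cov₁.nonempty' i) hP₁top
  obtain ⟨ci, hci⟩ := subset_qBall_of_outRad h₁ (Cov₁.bounded' i) (Cov₁.nonempty' i)
    hK₁ (hratio₁ i) hD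
  -- volume of `P₁ i` compared with `D`
  have hv₁up : v₁ ≤ (2 * K₁ * D) ^ S.Q * V₁r := by
    have h1 : volume (Cov₁.P i) ≤ ENNReal.ofReal ((2 * K₁ * D) ^ S.Q) * V₁ := by
      rw [← hVol₁ ci (by positivity)]
      exact measure_mono hci
    have h2 := ENNReal.toReal_mono
      (ENNReal.mul_ne_top ENNReal.ofReal_ne_top hV₁top) h1
    rwa [ENNReal.toReal_mul, ENNReal.toReal_ofReal (by positivity)] at h2
  have hv₁low : D ^ S.Q / 2 ^ S.Q * V₁r ≤ v₁ := by
    have h1 := volume_ge_of_inRad h₁ hVol₁ (P := Cov₁.P i) hD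
    have h2 := ENNReal.toReal_mono hP₁top h1
    rwa [ENNReal.toReal_mul, ENNReal.toReal_ofReal (by positivity), div_pow] at h2
  -- per-piece facts for every `j` meeting `P₁ i`
  have hper : ∀ j : J, (Cov₂.P j ∩ Cov₁.P i).Nonempty →
      ENNReal.ofReal (v₁ / Cw) ≤ volume (Cov₂.P j) ∧
      Cov₂.P j ⊆ qBall S N₂ ci ((Λ₂ + 1) * D) := by
    intro j hj
    obtain ⟨ξ, hξ₂, hξ₁⟩ := hj
    have hP₂top : volume (Cov₂.P j) ≠ ⊤ := ((Cov₂.bounded' j).measure_lt_top).ne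
    have hP₂pos : 0 < volume (Cov₂.P j) :=
      (Cov₂.isOpen' j).measure_pos volume (Cov₂.nonempty' j)
    set v₂ : ℝ := (volume (Cov₂.P j)).toReal with hv₂def
    have hv₂ : 0 < v₂ := ENNReal.toReal_pos hP₂pos.ne' hP₂top
    -- volume comparison through the weights
    obtain ⟨hs₁a, hs₁b⟩ := hsize₁ i ξ hξ₁
    obtain ⟨hs₂a, hs₂b⟩ := hsize₂ j ξ hξ₂
    have hw₂₁ : (1 + N₂ ξ ^ 2) ^ β ≤ (a₁₂ ^ 2) ^ β * ((1 + N₁ ξ ^ 2) ^ β) :=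
      weight_compare ha₁₂ hβ (h₂.nonneg ξ) (h₁.nonneg ξ) (hcmp₁₂ ξ)
    have hw₁₂ : (1 + N₁ ξ ^ 2) ^ β ≤ (a₂₁ ^ 2) ^ β * ((1 + N₂ ξ ^ 2) ^ β) :=
      weight_compare ha₂₁ hβ (h₁.nonneg ξ) (h₂.nonneg ξ) (hcmp₂₁ ξ)
    have ha₂₁0 : (0 : ℝ) < a₂₁ := lt_of_lt_of_le one_pos ha₂₁
    have hv₂v₁ : v₂ ≤ Cw * v₁ := by
      calc v₂ ≤ c₂ * (1 + N₂ ξ ^ 2) ^ β := hs₂a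
        _ ≤ c₂ * ((a₁₂ ^ 2) ^ β * ((1 + N₁ ξ ^ 2) ^ β)) :=
            mul_le_mul_of_nonneg_left hw₂₁ hc₂.le
        _ = c₂ * (a₁₂ ^ 2) ^ β * (1 + N₁ ξ ^ 2) ^ β := by ring
        _ ≤ c₂ * (a₁₂ ^ 2) ^ β * (c₁ * v₁) :=
            mul_le_mul_of_nonneg_left hs₁b (by positivity)
        _ = c₂ * (a₁₂ ^ 2) ^ β * c₁ * v₁ := by ring
        _ ≤ Cw * v₁ := mul_le_mul_of_nonneg_right (le_max_left _ _) hv₁.le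
    have hv₁v₂ : v₁ ≤ Cw * v₂ := by
      calc v₁ ≤ c₁ * (1 + N₁ ξ ^ 2) ^ β := hs₁a
        _ ≤ c₁ * ((a₂₁ ^ 2) ^ β * ((1 + N₂ ξ ^ 2) ^ β)) :=
            mul_le_mul_of_nonneg_left hw₁₂ hc₁.le
        _ = c₁ * (a₂₁ ^ 2) ^ β * (1 + N₂ ξ ^ 2) ^ β := by ring
        _ ≤ c₁ * (a₂₁ ^ 2) ^ β * (c₂ * v₂) :=
            mul_le_mul_of_nonneg_left hs₂b (by positivity)
        _ = c₁ * (a₂₁ ^ 2) ^ β * c₂ * v₂ := by ring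
        _ ≤ Cw * v₂ := mul_le_mul_of_nonneg_right (le_max_right _ _) hv₂.le
    constructor
    · -- lower volume bound
      have : v₁ / Cw ≤ v₂ := (div_le_iff₀' hCw).2 hv₁v₂
      calc ENNReal.ofReal (v₁ / Cw) ≤ ENNReal.ofReal v₂ := ENNReal.ofReal_le_ofReal this
        _ = volume (Cov₂.P j) := ENNReal.ofReal_toReal hP₂top
    · -- containment in the big ball
      set E : ℝ := inRad S N₂ (Cov₂.P j) with hEdef
      have hE : 0 < E := inRad_pos hn h₂ hV₂0 hV₂top hVol₂ (Cov₂.isOpen' j)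
        (Cov₂.nonempty' j) hP₂top
      -- the inner radius of `P₂ j` is controlled by `D`
      have hElow : E ^ S.Q / 2 ^ S.Q * V₂r ≤ v₂ := by
        have h1 := volume_ge_of_inRad h₂ hVol₂ (P := Cov₂.P j) hE
        have h2 := ENNReal.toReal_mono hP₂top h1
        rwa [ENNReal.toReal_mul, ENNReal.toReal_ofReal (by positivity), div_pow] at h2
      have hED : E ≤ Λ * D := by
        have h3a : (E / 2) ^ S.Q * V₂r ≤ Cw * ((2 * K₁ * D) ^ S.Q * V₁r) := by
          rw [div_pow]
          calc E ^ S.Q / 2 ^ S.Q * V₂r ≤ v₂ := hElow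
            _ ≤ Cw * v₁ := hv₂v₁
            _ ≤ Cw * ((2 * K₁ * D) ^ S.Q * V₁r) := mul_le_mul_of_nonneg_left hv₁up hCw.le
        have h3 : (E / 2) ^ S.Q ≤ X * (2 * K₁ * D) ^ S.Q := by
          rw [← le_div_iff₀ hV₂r] at h3a
          calc (E / 2) ^ S.Q ≤ Cw * ((2 * K₁ * D) ^ S.Q * V₁r) / V₂r := h3a
            _ = Cw * V₁r / V₂r * (2 * K₁ * D) ^ S.Q := by ring
            _ = X * (2 * K₁ * D) ^ S.Q := by rw [hXdef]
        have h4 : ((E / 2) / (2 * K₁ * D)) ^ S.Q ≤ X := by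
          rw [div_pow]
          exact (div_le_iff₀ (by positivity)).2 (by linarith [h3])
        have h5 := pow_root_bound hQ (by positivity) hX.le h4
        rw [div_le_iff₀ (by positivity)] at h5
        calc E = 2 * (E / 2) := by ring
          _ ≤ 2 * (X ^ ((S.Q : ℝ))⁻¹ * (2 * K₁ * D)) := by linarith
          _ = Λ * D := by rw [hΛdef]; ring
      obtain ⟨cj, hcj⟩ := subset_qBall_of_outRad h₂ (Cov₂.bounded' j)
        (Cov₂.nonempty' j) hK₂ (hratio₂ j) hE
      intro h hh
      show N₂ (S.mul (S.inv ci) h) < (Λ₂ + 1) * D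
      have hu : N₂ (S.mul (S.inv ci) ξ) ≤ a₁₂ * (2 * K₁ * D) := by
        have h1 : N₁ (S.mul (S.inv ci) ξ) < 2 * K₁ * D := hci hξ₁
        calc N₂ (S.mul (S.inv ci) ξ) ≤ a₁₂ * N₁ (S.mul (S.inv ci) ξ) := hcmp₁₂ _
          _ ≤ a₁₂ * (2 * K₁ * D) := mul_le_mul_of_nonneg_left h1.le ha₁₂0.le
      have hs1 : N₂ (S.mul (S.inv ξ) cj) < 2 * K₂ * E := by
        rw [norm_swap h₂]
        exact hcj hξ₂
      have hs2 : N₂ (S.mul (S.inv cj) h) < 2 * K₂ * E := hcj hh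
      have hw : N₂ (S.mul (S.inv ξ) h) ≤ Ct * (4 * K₂ * E) := by
        calc N₂ (S.mul (S.inv ξ) h)
            = N₂ (S.mul (S.mul (S.inv ξ) cj) (S.mul (S.inv cj) h)) := by
              rw [← S.cocycle ξ cj h]
          _ ≤ Ct * (N₂ (S.mul (S.inv ξ) cj) + N₂ (S.mul (S.inv cj) h)) := htri _ _
          _ ≤ Ct * (4 * K₂ * E) := by
              refine mul_le_mul_of_nonneg_left ?_ hCt0.le
              linarith
      have hfin : N₂ (S.mul (S.inv ci) h) ≤ Λ₂ * D := by
        calc N₂ (S.mul (S.inv ci) h)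
            = N₂ (S.mul (S.mul (S.inv ci) ξ) (S.mul (S.inv ξ) h)) := by
              rw [← S.cocycle ci ξ h]
          _ ≤ Ct * (N₂ (S.mul (S.inv ci) ξ) + N₂ (S.mul (S.inv ξ) h)) := htri _ _
          _ ≤ Ct * (a₁₂ * (2 * K₁ * D) + Ct * (4 * K₂ * (Λ * D))) := by
              refine mul_le_mul_of_nonneg_left ?_ hCt0.le
              have : Ct * (4 * K₂ * E) ≤ Ct * (4 * K₂ * (Λ * D)) := by
                refine mul_le_mul_of_nonneg_left ?_ hCt0.le
                refine mul_le_mul_of_nonneg_left hED (by positivity)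
              linarith
          _ = Λ₂ * D := by rw [hΛ₂def]; ring
      have : Λ₂ * D < (Λ₂ + 1) * D := mul_lt_mul_of_pos_right (lt_add_one Λ₂) hD
      linarith
  -- counting
  set Big : Set (Fin n → ℝ) := qBall S N₂ ci ((Λ₂ + 1) * D) with hBigdef
  have hBigvol : volume Big = ENNReal.ofReal (((Λ₂ + 1) * D) ^ S.Q) * V₂ :=
    hVol₂ ci (by positivity)
  have hsum : (F.card : ENNReal) * ENNReal.ofReal (v₁ / Cw) ≤
      (M₂ : ENNReal) * volume Big := by
    have hlow : ∀ j ∈ F, ENNReal.ofReal (v₁ / Cw) ≤ volume (Cov₂.P j) :=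
      fun j hj => (hper j (hF hj)).1
    have h1 : F.card • ENNReal.ofReal (v₁ / Cw) ≤ ∑ j ∈ F, volume (Cov₂.P j) :=
      Finset.card_nsmul_le_sum F _ _ hlow
    rw [nsmul_eq_mul] at h1
    refine le_trans h1 ?_
    exact sum_volume_le_of_boundedOverlap F (fun j => (Cov₂.isOpen' j).measurableSet)
      (isOpen_qBall h₂ ci _).measurableSet (fun j hj => (hper j (hF hj)).2)
      (overlap_of_admissible hadm₂)
  -- pass to real numbers
  have hRHStop : (M₂ : ENNReal) * volume Big ≠ ⊤ := by
    rw [hBigvol]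
    exact ENNReal.mul_ne_top (ENNReal.natCast_ne_top M₂)
      (ENNReal.mul_ne_top ENNReal.ofReal_ne_top hV₂top)
  have hreal := ENNReal.toReal_mono hRHStop hsum
  rw [ENNReal.toReal_mul, ENNReal.toReal_natCast,
    ENNReal.toReal_ofReal (by positivity), hBigvol, ENNReal.toReal_mul,
    ENNReal.toReal_mul, ENNReal.toReal_natCast,
    ENNReal.toReal_ofReal (by positivity)] at hreal
  -- `hreal : F.card * (v₁ / Cw) ≤ M₂ * (((Λ₂+1)*D)^Q * V₂r)`
  have hmain : (F.card : ℝ) * v₁ ≤ (M₂ : ℝ) * (Λ₂ + 1) ^ S.Q * D ^ S.Q * V₂r * Cw := by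
    have h1 : (F.card : ℝ) * v₁ = ((F.card : ℝ) * (v₁ / Cw)) * Cw := by
      field_simp
    rw [mul_pow] at hreal
    rw [h1]
    calc ((F.card : ℝ) * (v₁ / Cw)) * Cw
        ≤ ((M₂ : ℝ) * ((Λ₂ + 1) ^ S.Q * D ^ S.Q * V₂r)) * Cw :=
          mul_le_mul_of_nonneg_right hreal hCw.le
      _ = (M₂ : ℝ) * (Λ₂ + 1) ^ S.Q * D ^ S.Q * V₂r * Cw := by ring
  -- eliminate the scale `D`
  have hcard : (F.card : ℝ) * V₁r ≤ B' := by
    have h1 : ((F.card : ℝ) * V₁r) * D ^ S.Q ≤ B' * D ^ S.Q := by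
      calc ((F.card : ℝ) * V₁r) * D ^ S.Q
          = ((F.card : ℝ) * (D ^ S.Q / 2 ^ S.Q * V₁r)) * 2 ^ S.Q := by
            field_simp
        _ ≤ ((F.card : ℝ) * v₁) * 2 ^ S.Q := by
            refine mul_le_mul_of_nonneg_right
              (mul_le_mul_of_nonneg_left hv₁low (Nat.cast_nonneg _)) (by positivity)
        _ ≤ ((M₂ : ℝ) * (Λ₂ + 1) ^ S.Q * D ^ S.Q * V₂r * Cw) * 2 ^ S.Q :=
            mul_le_mul_of_nonneg_right hmain (by positivity)
        _ = B' * D ^ S.Q := by rw [hB'def]; ring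
    exact le_of_mul_le_mul_right h1 (pow_pos hD _)
  have hfinal : (F.card : ℝ) ≤ B' / V₁r := (le_div_iff₀ hV₁r).2 hcard
  have := le_trans hfinal (Nat.le_ceil _)
  exact_mod_cast this

/-- Any two generalized `α`-coverings for the same stratified Lie group
(possibly with respect to different homogeneous quasi-norms) are weakly equivalent. -/
theorem genAlphaCoverings_weakly_equivalent {n : ℕ} {I J : Type*}
    (S : StratifiedGroup n) (N₁ N₂ : (Fin n → ℝ) → ℝ)
    (h₁ : IsQuasiNorm S N₁) (h₂ : IsQuasiNorm S N₂)
    (hHaar : ∀ (g : Fin n → ℝ) (A : Set (Fin n → ℝ)),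
      volume ((fun h => S.mul g h) ⁻¹' A) = volume A)
    (α : ℝ) (hα₀ : 0 ≤ α) (hα₁ : α ≤ 1)
    (Cov₁ : GenAlphaCovering S N₁ α I) (Cov₂ : GenAlphaCovering S N₂ α J) :
    (∃ M : ℕ, ∀ i : I, {j : J | (Cov₂.P j ∩ Cov₁.P i).Nonempty}.encard ≤ (M : ℕ∞)) ∧
    (∃ M : ℕ, ∀ j : J, {i : I | (Cov₁.P i ∩ Cov₂.P j).Nonempty}.encard ≤ (M : ℕ∞)) := by
  rcases Nat.eq_zero_or_pos n with hn | hn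
  · -- the zero-dimensional (trivial) case
    subst hn
    have hsub : ∀ (a b : Fin 0 → ℝ), a = b := fun a b => funext fun j => j.elim0
    constructor
    · rcases isEmpty_or_nonempty J with hJ | hJ
      · refine ⟨0, fun i => ?_⟩
        rw [Set.eq_empty_of_isEmpty {j : J | (Cov₂.P j ∩ Cov₁.P i).Nonempty}]
        simp
      · obtain ⟨j₀⟩ := hJ
        obtain ⟨M₂, hadm₂⟩ := Cov₂.admissible
        refine ⟨M₂, fun i => le_trans (Set.encard_mono ?_) (hadm₂ j₀)⟩
        intro j _
        obtain ⟨x, hx⟩ := Cov₂.nonempty' j₀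
        obtain ⟨y, hy⟩ := Cov₂.nonempty' j
        exact ⟨x, hx, hsub y x ▸ hy⟩
    · rcases isEmpty_or_nonempty I with hI | hI
      · refine ⟨0, fun j => ?_⟩
        rw [Set.eq_empty_of_isEmpty {i : I | (Cov₁.P i ∩ Cov₂.P j).Nonempty}]
        simp
      · obtain ⟨i₀⟩ := hI
        obtain ⟨M₁, hadm₁⟩ := Cov₁.admissible
        refine ⟨M₁, fun j => le_trans (Set.encard_mono ?_) (hadm₁ i₀)⟩
        intro i _
        obtain ⟨x, hx⟩ := Cov₁.nonempty' i₀
        obtain ⟨y, hy⟩ := Cov₁.nonempty' i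
        exact ⟨x, hx, hsub y x ▸ hy⟩
  · exact ⟨key_oneSided hn S N₁ N₂ h₁ h₂ hHaar α hα₀ Cov₁ Cov₂,
      key_oneSided hn S N₂ N₁ h₂ h₁ hHaar α hα₀ Cov₂ Cov₁⟩
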